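/- Let $P^*$ be a stochastic matrix on a finite state space with unique stationary distribution $\pi^*$ and mixing time $t_{\mathrm{mix}}(\epsilon/2)$ (i.e., $\|(P^*)^t \rho - \pi^*\|_1 \le \epsilon/2$ for all probability distributions $\rho$ and all $t \ge t_{\mathrm{mix}}(\epsilon/2)$). Suppose $\{P_t\}_{t\ge 1}$ is a sequence of stochastic matrices with $\|P_t - P^*\|_1 \le \epsilon/(2 t_{\mathrm{mix}}(\epsilon/2))$ for all $t$. Then for any $t \ge t_{\mathrm{mix}}(\epsilon/2)$ and any initial probability distribution $\rho$, $\|P_t P_{t-1} \cdots P_1 \rho - \pi^*\|_1 \le \epsilon$. -/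

import Mathlib

open Finset

variable {X : Type*} [Fintype X]

/-- Apply a stochastic kernel to a distribution: `(step P ρ) x' = ∑ x, P x' x * ρ x`. -/
noncomputable def step (P : X → X → ℝ) (ρ : X → ℝ) : X → ℝ :=
  fun x' => ∑ x, P x' x * ρ x

/-- `P_t P_{t-1} ⋯ P_1 ρ`. -/
noncomputable def seqApply (P : ℕ → X → X → ℝ) (ρ : X → ℝ) : ℕ → X → ℝ
  | 0 => ρ
  | (t + 1) => step (P (t + 1)) (seqApply P ρ t)

lemma step_nonneg (P : X → X → ℝ) (ρ : X → ℝ) (hP : ∀ x x', 0 ≤ P x' x)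
    (hρ : ∀ x, 0 ≤ ρ x) : ∀ x', 0 ≤ step P ρ x' :=
  fun x' => Finset.sum_nonneg fun x _ => mul_nonneg (hP x x') (hρ x)

lemma step_sum (P : X → X → ℝ) (ρ : X → ℝ) (hP : ∀ x, ∑ x', P x' x = 1) :
    ∑ x', step P ρ x' = ∑ x, ρ x := by
  unfold step
  rw [Finset.sum_comm]
  simp [← Finset.sum_mul, hP]

lemma step_contract (P : X → X → ℝ) (hPn : ∀ x x', 0 ≤ P x' x)
    (hPs : ∀ x, ∑ x', P x' x = 1) (τ τ' : X → ℝ) :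
    ∑ x', |step P τ x' - step P τ' x'| ≤ ∑ x, |τ x - τ' x| := by
  have h : ∀ x', |step P τ x' - step P τ' x'| ≤ ∑ x, P x' x * |τ x - τ' x| := by
    intro x'
    have he : step P τ x' - step P τ' x' = ∑ x, P x' x * (τ x - τ' x) := by
      simp [step, mul_sub, Finset.sum_sub_distrib]
    rw [he]
    calc |∑ x, P x' x * (τ x - τ' x)| ≤ ∑ x, |P x' x * (τ x - τ' x)| :=
          Finset.abs_sum_le_sum_abs _ _
      _ = ∑ x, P x' x * |τ x - τ' x| := by
          refine Finset.sum_congr rfl fun x _ => ?_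
          rw [abs_mul, abs_of_nonneg (hPn x x')]
  calc ∑ x', |step P τ x' - step P τ' x'| ≤ ∑ x', ∑ x, P x' x * |τ x - τ' x| :=
        Finset.sum_le_sum fun x' _ => h x'
    _ = ∑ x, (∑ x', P x' x) * |τ x - τ' x| := by
        rw [Finset.sum_comm]; simp [Finset.sum_mul]
    _ = ∑ x, |τ x - τ' x| := by simp [hPs]

lemma step_perturb (P Q : X → X → ℝ) (σ : X → ℝ) (hσn : ∀ x, 0 ≤ σ x)
    (hσs : ∑ x, σ x = 1) (C : ℝ) (hC : ∀ x, ∑ x', |P x' x - Q x' x| ≤ C) :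
    ∑ x', |step P σ x' - step Q σ x'| ≤ C := by
  have h : ∀ x', |step P σ x' - step Q σ x'| ≤ ∑ x, |P x' x - Q x' x| * σ x := by
    intro x'
    have he : step P σ x' - step Q σ x' = ∑ x, (P x' x - Q x' x) * σ x := by
      simp [step, sub_mul, Finset.sum_sub_distrib]
    rw [he]
    calc |∑ x, (P x' x - Q x' x) * σ x| ≤ ∑ x, |(P x' x - Q x' x) * σ x| :=
          Finset.abs_sum_le_sum_abs _ _
      _ = ∑ x, |P x' x - Q x' x| * σ x := by
          refine Finset.sum_congr rfl fun x _ => ?_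
          rw [abs_mul, abs_of_nonneg (hσn x)]
  calc ∑ x', |step P σ x' - step Q σ x'| ≤ ∑ x', ∑ x, |P x' x - Q x' x| * σ x :=
        Finset.sum_le_sum fun x' _ => h x'
    _ = ∑ x, (∑ x', |P x' x - Q x' x|) * σ x := by
        rw [Finset.sum_comm]; simp [Finset.sum_mul]
    _ ≤ ∑ x, C * σ x := Finset.sum_le_sum fun x _ =>
        mul_le_mul_of_nonneg_right (hC x) (hσn x)
    _ = C := by rw [← Finset.mul_sum, hσs, mul_one]

lemma seqApply_const_contract (Q : X → X → ℝ) (hQn : ∀ x x', 0 ≤ Q x' x)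
    (hQs : ∀ x, ∑ x', Q x' x = 1) (k : ℕ) (τ τ' : X → ℝ) :
    ∑ x, |seqApply (fun _ => Q) τ k x - seqApply (fun _ => Q) τ' k x| ≤
      ∑ x, |τ x - τ' x| := by
  induction k with
  | zero => simp [seqApply]
  | succ k ih =>
      calc ∑ x, |seqApply (fun _ => Q) τ (k+1) x - seqApply (fun _ => Q) τ' (k+1) x|
          ≤ ∑ x, |seqApply (fun _ => Q) τ k x - seqApply (fun _ => Q) τ' k x| :=
            step_contract Q hQn hQs _ _
        _ ≤ ∑ x, |τ x - τ' x| := ih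

lemma seqApply_const_step (Q : X → X → ℝ) (σ : X → ℝ) (k : ℕ) :
    seqApply (fun _ => Q) (step Q σ) k = seqApply (fun _ => Q) σ (k + 1) := by
  induction k with
  | zero => simp [seqApply]
  | succ k ih => simp [seqApply, ih]

/-- Perturbed-chain mixing lemma: if each `P_t` is `ε/(2 t_mix(ε/2))`-close to `P*` in the
operator ℓ¹ norm, then for `t ≥ t_mix(ε/2)`, `‖P_t ⋯ P_1 ρ - π*‖₁ ≤ ε`. -/
theorem stmt0
    (Pstar : X → X → ℝ) (pistar : X → ℝ) (P : ℕ → X → X → ℝ)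
    (ε : ℝ) (hε : 0 < ε) (tmix : ℕ) (htmix : 0 < tmix)
    (hPstar_nonneg : ∀ x x', 0 ≤ Pstar x' x)
    (hPstar_sum : ∀ x, ∑ x', Pstar x' x = 1)
    (hP_nonneg : ∀ t x x', 0 ≤ P t x' x)
    (hP_sum : ∀ t x, ∑ x', P t x' x = 1)
    (hpistar_nonneg : ∀ x, 0 ≤ pistar x) (hpistar_sum : ∑ x, pistar x = 1)
    (hstat : step Pstar pistar = pistar)
    (hmix : ∀ ρ : X → ℝ, (∀ x, 0 ≤ ρ x) → (∑ x, ρ x = 1) →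
      ∀ t ≥ tmix, ∑ x, |seqApply (fun _ => Pstar) ρ t x - pistar x| ≤ ε / 2)
    (hclose : ∀ t x, ∑ x', |P t x' x - Pstar x' x| ≤ ε / (2 * tmix))
    (ρ : X → ℝ) (hρ_nonneg : ∀ x, 0 ≤ ρ x) (hρ_sum : ∑ x, ρ x = 1) :
    ∀ t ≥ tmix, ∑ x, |seqApply P ρ t x - pistar x| ≤ ε := by
  -- seqApply P ρ s is a distribution
  have hdist : ∀ s, (∀ x, 0 ≤ seqApply P ρ s x) ∧ (∑ x, seqApply P ρ s x = 1) := by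
    intro s
    induction s with
    | zero => exact ⟨hρ_nonneg, hρ_sum⟩
    | succ s ih =>
        refine ⟨step_nonneg _ _ (hP_nonneg (s+1)) ih.1, ?_⟩
        rw [show seqApply P ρ (s+1) = step (P (s+1)) (seqApply P ρ s) from rfl,
          step_sum _ _ (hP_sum (s+1)), ih.2]
  -- hybrid argument
  have key : ∀ k, ∀ t, k ≤ t →
      ∑ x, |seqApply P ρ t x -
        seqApply (fun _ => Pstar) (seqApply P ρ (t - k)) k x| ≤ k * (ε / (2 * tmix)) := by
    intro k
    induction k with
    | zero => intro t ht; simp [seqApply]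
    | succ k ih =>
        intro t ht
        set m := t - (k + 1) with hm
        have hmk : t - k = m + 1 := by omega
        set σ := seqApply P ρ m with hσ
        have hstep : seqApply P ρ (t - k) = step (P (m+1)) σ := by
          rw [hmk]; rfl
        have h1 : ∑ x, |seqApply P ρ t x -
            seqApply (fun _ => Pstar) (seqApply P ρ (t - k)) k x| ≤ k * (ε / (2 * tmix)) :=
          ih t (by omega)
        have h2 : ∑ x, |seqApply (fun _ => Pstar) (seqApply P ρ (t - k)) k x -
            seqApply (fun _ => Pstar) σ (k + 1) x| ≤ ε / (2 * tmix) := by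
          rw [hstep, ← seqApply_const_step Pstar σ k]
          calc ∑ x, |seqApply (fun _ => Pstar) (step (P (m+1)) σ) k x -
                seqApply (fun _ => Pstar) (step Pstar σ) k x|
              ≤ ∑ x, |step (P (m+1)) σ x - step Pstar σ x| :=
                seqApply_const_contract Pstar hPstar_nonneg hPstar_sum k _ _
            _ ≤ ε / (2 * tmix) :=
                step_perturb _ _ σ (hdist m).1 (hdist m).2 _ (hclose (m+1))
        calc ∑ x, |seqApply P ρ t x - seqApply (fun _ => Pstar) (seqApply P ρ (t - (k+1))) (k+1) x|
            ≤ ∑ x, (|seqApply P ρ t x - seqApply (fun _ => Pstar) (seqApply P ρ (t - k)) k x| +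
              |seqApply (fun _ => Pstar) (seqApply P ρ (t - k)) k x -
                seqApply (fun _ => Pstar) σ (k+1) x|) := by
              refine Finset.sum_le_sum fun x _ => ?_
              have : seqApply P ρ (t - (k+1)) = σ := rfl
              rw [this]
              exact abs_sub_le _ _ _
          _ = (∑ x, |seqApply P ρ t x - seqApply (fun _ => Pstar) (seqApply P ρ (t - k)) k x|) +
              ∑ x, |seqApply (fun _ => Pstar) (seqApply P ρ (t - k)) k x -
                seqApply (fun _ => Pstar) σ (k+1) x| := Finset.sum_add_distrib
          _ ≤ k * (ε / (2 * tmix)) + ε / (2 * tmix) := add_le_add h1 h2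
          _ = (k + 1) * (ε / (2 * tmix)) := by ring
          _ = ((k + 1 : ℕ) : ℝ) * (ε / (2 * tmix)) := by push_cast; ring
  intro t ht
  set σ := seqApply P ρ (t - tmix) with hσ
  have h1 : ∑ x, |seqApply P ρ t x - seqApply (fun _ => Pstar) σ tmix x| ≤
      tmix * (ε / (2 * tmix)) := key tmix t ht
  have h2 : ∑ x, |seqApply (fun _ => Pstar) σ tmix x - pistar x| ≤ ε / 2 :=
    hmix σ (hdist _).1 (hdist _).2 tmix le_rfl
  have htm : (tmix : ℝ) ≠ 0 := Nat.cast_ne_zero.mpr (by omega)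
  have heq : (tmix : ℝ) * (ε / (2 * tmix)) = ε / 2 := by field_simp
  calc ∑ x, |seqApply P ρ t x - pistar x|
      ≤ ∑ x, (|seqApply P ρ t x - seqApply (fun _ => Pstar) σ tmix x| +
        |seqApply (fun _ => Pstar) σ tmix x - pistar x|) :=
        Finset.sum_le_sum fun x _ => abs_sub_le _ _ _
    _ = (∑ x, |seqApply P ρ t x - seqApply (fun _ => Pstar) σ tmix x|) +
        ∑ x, |seqApply (fun _ => Pstar) σ tmix x - pistar x| := Finset.sum_add_distrib
    _ ≤ tmix * (ε / (2 * tmix)) + ε / 2 := add_le_add h1 h2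
    _ = ε / 2 + ε / 2 := by rw [heq]
    _ = ε := by ring
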